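/- For all integers n, l0, j with 1 ≤ l0 ≤ n−1 and 1 ≤ j ≤ l0+1, the function z^j · Σ_{l=0}^{l0+1} C^{(l)}_{n,l0+1} · P_{n−l}(z) lies in the real linear span of {P_{n+j−l0−1}(z), P_{n+j−l0}(z), …, P_{n+j}(z)}. -/
import Mathlib


open Finset

/-- Pochhammer symbol `(a)_k = a (a+1) ⋯ (a+k-1)`. -/
noncomputable def poch (a : ℝ) (k : ℕ) : ℝ := ∏ i ∈ Finset.range k, (a + (i : ℝ))

/-- The Hendriksen–van Rossum polynomial `P_n(z; α, β)`. -/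
noncomputable def HR (α β : ℝ) (n : ℕ) (z : ℝ) : ℝ :=
  (poch β n / poch (α + 1) n) *
    ∑ k ∈ Finset.range (n + 1),
      poch (-(n : ℝ)) k * poch (α + 1) k /
          (poch (1 - β - (n : ℝ)) k * (Nat.factorial k : ℝ)) * z ^ k

/-- `d_m(α,β) = −(m+β)/(m+α+1)`. -/
noncomputable def dco (α β m : ℝ) : ℝ := -(m + β) / (m + α + 1)

/-- `b_m(α,β) = −m(m+α+β)/((m+α)(m+α+1))`. -/
noncomputable def bco (α β m : ℝ) : ℝ := -(m * (m + α + β)) / ((m + α) * (m + α + 1))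

/-- Connection coefficients `C^{(l)}_{n,j}` (computed with parameters `(α,β)`):
`C^{(0)}_{n,j} = 1`; `C^{(1)}_{n,j} = Σ_{k=0}^{j−1} b_n(α+k, β−k)`;
`C^{(j)}_{n,j} = Π_{k=0}^{j−1} b_{n−k}(α+j−1−k, β−j+1+k)`;
`C^{(l)}_{n,j} = C^{(l)}_{n,j−1} + b_n(α+j−1, β−j+1)·C^{(l−1)}_{n−1,j−1}` for `2 ≤ l ≤ j−1`;
and `0` out of range. Arguments: `Ccoef α β n j l`. -/
noncomputable def Ccoef (α β : ℝ) : ℕ → ℕ → ℕ → ℝ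
  | _, _, 0 => 1
  | n, j, 1 =>
      if 1 ≤ j then ∑ k ∈ Finset.range j, bco (α + (k : ℝ)) (β - (k : ℝ)) (n : ℝ) else 0
  | _, 0, (_ + 2) => 0
  | n, (j + 1), (l + 2) =>
      if l + 2 = j + 1 then
        ∏ k ∈ Finset.range (j + 1),
          bco (α + (j : ℝ) - (k : ℝ)) (β - (j : ℝ) + (k : ℝ)) ((n : ℝ) - (k : ℝ))
      else if l + 2 ≤ j then
        Ccoef α β n j (l + 2)
          + bco (α + (j : ℝ)) (β - (j : ℝ)) (n : ℝ) * Ccoef α β (n - 1) j (l + 1)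
      else 0


-- ===== auxiliary lemmas =====
set_option maxHeartbeats 2000000

lemma poch_succ (a : ℝ) (k : ℕ) : poch a (k+1) = poch a k * (a + k) := by
  simp [poch, Finset.prod_range_succ]

lemma poch_succ' (a : ℝ) (k : ℕ) : poch a (k+1) = a * poch (a+1) k := by
  simp only [poch, Finset.prod_range_succ']
  rw [mul_comm]
  congr 1
  · norm_num
  · exact Finset.prod_congr rfl (fun i _ => by push_cast; ring)

lemma poch_shift (a : ℝ) (k : ℕ) : a * poch (a+1) k = poch a k * (a + k) := by
  rw [← poch_succ', poch_succ]

lemma poch_ne_zero {a : ℝ} (h : ∀ q : ℤ, a ≠ (q : ℝ)) (k : ℕ) : poch a k ≠ 0 := by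
  unfold poch
  rw [Finset.prod_ne_zero_iff]
  intro i _ he
  exact h (-i) (by push_cast; linarith)

lemma keyA (α β M K B X U V Z F W : ℝ)
    (hX : X ≠ 0) (hV : V ≠ 0) (hF : F ≠ 0) (h1 : α+1 ≠ 0) (h2 : α+1+M ≠ 0)
    (h3 : α+1+1+M ≠ 0) (h4 : 1-β-(M+1)+K ≠ 0) (h5 : M+1 ≠ 0) (h6 : M+1+α ≠ 0)
    (h7 : M+1+α+1 ≠ 0) (h9 : 1-β-(M+1) ≠ 0) :
    (β-1)*B / (X*(α+1+1+M)) * (Z * (U*(α+1+K)/(α+1)) / (V*F) * W)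
    = B*(β+M) / ((α+1)*X) * (Z * U / ((1-β-(M+1))*V/(1-β-(M+1)+K) * F) * W)
    + -((M+1)*((M+1)+α+β)) / (((M+1)+α)*((M+1)+α+1)) *
        (B / ((α+1)*X/(α+1+M)) * (Z*(-(M+1)+K)/(-(M+1)) * U / (V*F) * W)) := by
  have h8 : -(M+1) ≠ 0 := by intro he; apply h5; linarith
  have h8'' : (-1:ℝ) + -M ≠ 0 := by intro he; apply h5; linarith
  field_simp
  ring

lemma lemA (α β : ℝ) (hα : ∀ q : ℤ, α ≠ (q:ℝ)) (hβ : ∀ q : ℤ, β ≠ (q:ℝ)) (m : ℕ) (z : ℝ) :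
    HR (α+1) (β-1) (m+1) z = HR α β (m+1) z + bco α β ((m:ℝ)+1) * HR α β m z := by
  have hpoch0 : poch (-(m:ℝ)) (m+1) = 0 := by
    apply Finset.prod_eq_zero (Finset.self_mem_range_succ m)
    ring
  unfold HR
  rw [Finset.mul_sum, Finset.mul_sum, Finset.mul_sum, Finset.mul_sum]
  have hext : ∀ g : ℕ → ℝ, g (m+1) = 0 →
      ∑ k ∈ Finset.range (m+1), g k = ∑ k ∈ Finset.range (m+2), g k := by
    intro g hg; conv_rhs => rw [Finset.sum_range_succ]
    rw [hg, add_zero]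
  rw [hext _ (by simp [hpoch0])]
  rw [← Finset.sum_add_distrib]
  apply Finset.sum_congr rfl
  intro k hk
  push_cast
  have hfk : (Nat.factorial k : ℝ) ≠ 0 := Nat.cast_ne_zero.2 (Nat.factorial_ne_zero k)
  have hX : poch (α+1+1) m ≠ 0 := poch_ne_zero (fun q he => hα (q-2) (by push_cast; linarith)) m
  have hV : poch (1-β-(m:ℝ)) k ≠ 0 := poch_ne_zero (fun q he => hβ (1-m-q) (by push_cast; linarith)) k
  have h1 : α+1 ≠ 0 := fun he => hα (-1) (by push_cast; linarith)
  have h2 : α+1+(m:ℝ) ≠ 0 := fun he => hα (-1-m) (by push_cast; linarith)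
  have h3 : α+1+1+(m:ℝ) ≠ 0 := fun he => hα (-2-m) (by push_cast; linarith)
  have h4 : 1-β-((m:ℝ)+1)+(k:ℝ) ≠ 0 := fun he => hβ (k-m) (by push_cast; linarith)
  have h5 : ((m:ℝ)+1) ≠ 0 := by positivity
  have h6 : ((m:ℝ)+1+α) ≠ 0 := fun he => hα (-1-m) (by push_cast; linarith)
  have h7 : ((m:ℝ)+1+α+1) ≠ 0 := fun he => hα (-2-m) (by push_cast; linarith)
  have e1 : poch (β-1) (m+1) = (β-1) * poch β m := by
    rw [poch_succ', show β-1+1 = β from by ring]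
  have e2 : poch β (m+1) = poch β m * (β+(m:ℝ)) := poch_succ β m
  have e3 : poch (α+1+1) (m+1) = poch (α+1+1) m * (α+1+1+(m:ℝ)) := poch_succ _ m
  have e4 : poch (α+1) (m+1) = (α+1) * poch (α+1+1) m := poch_succ' _ m
  have e5 : poch (α+1) m = (α+1) * poch (α+1+1) m / (α+1+(m:ℝ)) := by
    rw [eq_div_iff h2]; exact (poch_shift (α+1) m).symm
  have e6 : poch (α+1+1) k = poch (α+1) k * (α+1+(k:ℝ)) / (α+1) := by
    rw [eq_div_iff h1]; linarith [poch_shift (α+1) k]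
  have e7 : poch (1-(β-1)-((m:ℝ)+1)) k = poch (1-β-(m:ℝ)) k := by
    congr 1; ring
  have e8 : poch (1-β-((m:ℝ)+1)) k
      = (1-β-((m:ℝ)+1)) * poch (1-β-(m:ℝ)) k / (1-β-((m:ℝ)+1)+(k:ℝ)) := by
    rw [eq_div_iff h4]
    have := poch_shift (1-β-((m:ℝ)+1)) k
    rw [show 1-β-((m:ℝ)+1)+1 = 1-β-(m:ℝ) from by ring] at this
    linarith [this]
  have e9 : poch (-(m:ℝ)) k
      = poch (-((m:ℝ)+1)) k * (-((m:ℝ)+1)+(k:ℝ)) / (-((m:ℝ)+1)) := by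
    rw [eq_div_iff (by intro he; apply h5; linarith)]
    have := poch_shift (-((m:ℝ)+1)) k
    rw [show -((m:ℝ)+1)+1 = -(m:ℝ) from by ring] at this
    linarith [this]
  have h9 : 1-β-((m:ℝ)+1) ≠ 0 := fun he => hβ (-m) (by push_cast; linarith)
  rw [e1, e2, e3, e4, e5, e6, e7, e8, e9]
  unfold bco
  exact keyA α β (↑m) (↑k) (poch β m) (poch (α+1+1) m) (poch (α+1) k) (poch (1-β-↑m) k)
    (poch (-(↑m+1)) k) (↑k.factorial) (z^k) hX hV hfk h1 h2 h3 h4 h5 h6 h7 h9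

lemma lemA' (α β : ℝ) (hα : ∀ q : ℤ, α ≠ (q:ℝ)) (hβ : ∀ q : ℤ, β ≠ (q:ℝ)) (n : ℕ)
    (hn : 1 ≤ n) (z : ℝ) :
    HR (α+1) (β-1) n z = HR α β n z + bco α β (n:ℝ) * HR α β (n-1) z := by
  obtain ⟨m, rfl⟩ : ∃ m, n = m + 1 := ⟨n - 1, by omega⟩
  have := lemA α β hα hβ m z
  simpa using this

lemma keyB (α β N K Bv Av U V Z F W zz : ℝ)
    (hAv : Av ≠ 0) (hV : V ≠ 0) (hF : F ≠ 0)
    (g1 : α ≠ 0) (g2 : α+N ≠ 0) (g3 : β+N ≠ 0) (g4 : -β-N ≠ 0) (g5 : -β-N+K ≠ 0)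
    (g6 : -β-N-1 ≠ 0) (g7 : N+(α-1)+1 ≠ 0) (g8 : K+1 ≠ 0) :
    zz * (β*Bv/(β+N) / (Av*(α+N)/α) * (Z * U / (V*(-β-N+K)/(-β-N) * F) * W))
    = Bv*(β+1+N) / (Av*(α+N)) * ((-(N+1))*Z * (α*U) / ((-β-N-1)*V * ((K+1)*F)) * (W*zz))
    + -(N+(β+1))/(N+(α-1)+1) *
        (Bv / Av * (Z*(-N+K) * (α*U) / (V*(-β-N+K) * ((K+1)*F)) * (W*zz))) := by
  have g4' : -1 + (-β - N) ≠ 0 := by intro he; apply g6; linarith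
  have g7' : N + α ≠ 0 := by intro he; apply g7; linarith
  field_simp
  ring

lemma lemB (α β : ℝ) (hα : ∀ q : ℤ, α ≠ (q:ℝ)) (hβ : ∀ q : ℤ, β ≠ (q:ℝ)) (n : ℕ) (z : ℝ) :
    z * HR α β n z = HR (α-1) (β+1) (n+1) z + dco (α-1) (β+1) (n:ℝ) * HR (α-1) (β+1) n z := by
  have hpoch0 : poch (-(n:ℝ)) (n+1) = 0 := by
    apply Finset.prod_eq_zero (Finset.self_mem_range_succ n)
    ring
  unfold HR
  rw [Finset.mul_sum, Finset.mul_sum, Finset.mul_sum, Finset.mul_sum, Finset.mul_sum]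
  rw [Finset.sum_range_succ' (fun i => poch (β+1) (n+1) / poch (α-1+1) (n+1) *
      (poch (-((n+1 : ℕ) : ℝ)) i * poch (α-1+1) i /
        (poch (1-(β+1)-((n+1 : ℕ) : ℝ)) i * (Nat.factorial i : ℝ)) * z ^ i)) (n+1)]
  have hext : (∑ i ∈ Finset.range (n+1), dco (α-1) (β+1) (n:ℝ) *
      (poch (β+1) n / poch (α-1+1) n * (poch (-(n:ℝ)) i * poch (α-1+1) i /
        (poch (1-(β+1)-(n:ℝ)) i * (Nat.factorial i : ℝ)) * z ^ i)))
      = ∑ i ∈ Finset.range ((n+1)+1), dco (α-1) (β+1) (n:ℝ) *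
      (poch (β+1) n / poch (α-1+1) n * (poch (-(n:ℝ)) i * poch (α-1+1) i /
        (poch (1-(β+1)-(n:ℝ)) i * (Nat.factorial i : ℝ)) * z ^ i)) := by
    conv_rhs => rw [Finset.sum_range_succ]
    rw [hpoch0]
    ring
  rw [hext]
  rw [Finset.sum_range_succ' (fun i => dco (α-1) (β+1) (n:ℝ) *
      (poch (β+1) n / poch (α-1+1) n * (poch (-(n:ℝ)) i * poch (α-1+1) i /
        (poch (1-(β+1)-(n:ℝ)) i * (Nat.factorial i : ℝ)) * z ^ i))) (n+1)]
  have hAv : poch α n ≠ 0 := poch_ne_zero (fun q he => hα q (by linarith)) n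
  have g1 : α ≠ 0 := fun he => hα 0 (by push_cast; linarith)
  have g2 : α+(n:ℝ) ≠ 0 := fun he => hα (-n) (by push_cast; linarith)
  have g3 : β+(n:ℝ) ≠ 0 := fun he => hβ (-n) (by push_cast; linarith)
  have g4 : -β-(n:ℝ) ≠ 0 := fun he => hβ (-n) (by push_cast; linarith)
  have g6 : -β-(n:ℝ)-1 ≠ 0 := fun he => hβ (-n-1) (by push_cast; linarith)
  have g7 : (n:ℝ)+(α-1)+1 ≠ 0 := fun he => hα (-n) (by push_cast; linarith)
  have key : (∑ k ∈ Finset.range (n+1), z * (poch β n / poch (α+1) n *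
      (poch (-(n:ℝ)) k * poch (α+1) k / (poch (1-β-(n:ℝ)) k * (Nat.factorial k : ℝ)) * z ^ k)))
      = ∑ i ∈ Finset.range (n+1),
        ((poch (β+1) (n+1) / poch (α-1+1) (n+1) *
          (poch (-((n+1 : ℕ) : ℝ)) (i+1) * poch (α-1+1) (i+1) /
            (poch (1-(β+1)-((n+1 : ℕ) : ℝ)) (i+1) * (Nat.factorial (i+1) : ℝ)) * z ^ (i+1)))
        + (dco (α-1) (β+1) (n:ℝ) *
          (poch (β+1) n / poch (α-1+1) n * (poch (-(n:ℝ)) (i+1) * poch (α-1+1) (i+1) /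
            (poch (1-(β+1)-(n:ℝ)) (i+1) * (Nat.factorial (i+1) : ℝ)) * z ^ (i+1))))) := by
    apply Finset.sum_congr rfl
    intro i hi
    have hV : poch (-β-(n:ℝ)) i ≠ 0 :=
      poch_ne_zero (fun q he => hβ (-n-q) (by push_cast; linarith)) i
    have hF : (Nat.factorial i : ℝ) ≠ 0 := Nat.cast_ne_zero.2 (Nat.factorial_ne_zero i)
    have g5 : -β-(n:ℝ)+(i:ℝ) ≠ 0 := fun he => hβ (i-n) (by push_cast; linarith)
    have g8 : (i:ℝ)+1 ≠ 0 := by positivity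
    have r1 : poch β n = β * poch (β+1) n / (β+(n:ℝ)) := by
      rw [eq_div_iff g3]; linarith [poch_shift β n]
    have r2 : poch (α+1) n = poch α n * (α+(n:ℝ)) / α := by
      rw [eq_div_iff g1]; linarith [poch_shift α n]
    have r3 : poch (1-β-(n:ℝ)) i = poch (-β-(n:ℝ)) i * (-β-(n:ℝ)+(i:ℝ)) / (-β-(n:ℝ)) := by
      rw [eq_div_iff g4]
      have := poch_shift (-β-(n:ℝ)) i
      rw [show -β-(n:ℝ)+1 = 1-β-(n:ℝ) from by ring] at this
      linarith [this]
    have r4 : poch (β+1) (n+1) = poch (β+1) n * (β+1+(n:ℝ)) := poch_succ _ n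
    have r5 : poch (α-1+1) (n+1) = poch α n * (α+(n:ℝ)) := by
      rw [show α-1+1 = α from by ring]; exact poch_succ α n
    have r6 : poch (α-1+1) n = poch α n := by rw [show α-1+1 = α from by ring]
    have r7 : poch (-((n+1 : ℕ) : ℝ)) (i+1) = (-((n:ℝ)+1)) * poch (-(n:ℝ)) i := by
      push_cast
      rw [poch_succ', show -((n:ℝ)+1)+1 = -(n:ℝ) from by ring]
    have r8 : poch (α-1+1) (i+1) = α * poch (α+1) i := by
      rw [show α-1+1 = α from by ring]; exact poch_succ' α i
    have r9 : poch (1-(β+1)-((n+1 : ℕ) : ℝ)) (i+1) = (-β-(n:ℝ)-1) * poch (-β-(n:ℝ)) i := by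
      push_cast
      rw [show 1-(β+1)-((n:ℝ)+1) = -β-(n:ℝ)-1 from by ring]
      rw [poch_succ', show -β-(n:ℝ)-1+1 = -β-(n:ℝ) from by ring]
    have r10 : poch (1-(β+1)-(n:ℝ)) (i+1) = poch (-β-(n:ℝ)) i * (-β-(n:ℝ)+(i:ℝ)) := by
      rw [show 1-(β+1)-(n:ℝ) = -β-(n:ℝ) from by ring]; exact poch_succ _ i
    have r11 : poch (-(n:ℝ)) (i+1) = poch (-(n:ℝ)) i * (-(n:ℝ)+(i:ℝ)) := poch_succ _ i
    have r12 : (Nat.factorial (i+1) : ℝ) = ((i:ℝ)+1) * (Nat.factorial i : ℝ) := by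
      rw [Nat.factorial_succ]; push_cast; ring
    have r13 : z ^ (i+1) = z ^ i * z := pow_succ z i
    rw [r1, r2, r3, r4, r5, r6, r7, r8, r9, r10, r11, r12, r13]
    unfold dco
    exact keyB α β (↑n) (↑i) (poch (β+1) n) (poch α n) (poch (α+1) i) (poch (-β-(n:ℝ)) i)
      (poch (-(n:ℝ)) i) (↑(Nat.factorial i)) (z^i) z hAv hV hF g1 g2 g3 g4 g5 g6 g7 g8
  rw [key, Finset.sum_add_distrib]
  have h0 : (poch (β+1) (n+1) / poch (α-1+1) (n+1) *
      (poch (-((n+1 : ℕ) : ℝ)) 0 * poch (α-1+1) 0 /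
        (poch (1-(β+1)-((n+1 : ℕ) : ℝ)) 0 * (Nat.factorial 0 : ℝ)) * z ^ 0))
      + (dco (α-1) (β+1) (n:ℝ) *
      (poch (β+1) n / poch (α-1+1) n * (poch (-(n:ℝ)) 0 * poch (α-1+1) 0 /
        (poch (1-(β+1)-(n:ℝ)) 0 * (Nat.factorial 0 : ℝ)) * z ^ 0))) = 0 := by
    have p0 : ∀ a : ℝ, poch a 0 = 1 := fun a => by simp [poch]
    simp only [p0, Nat.factorial_zero, Nat.cast_one, pow_zero]
    have r4 : poch (β+1) (n+1) = poch (β+1) n * (β+1+(n:ℝ)) := poch_succ _ n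
    have r5 : poch (α-1+1) (n+1) = poch α n * (α+(n:ℝ)) := by
      rw [show α-1+1 = α from by ring]; exact poch_succ α n
    have r6 : poch (α-1+1) n = poch α n := by rw [show α-1+1 = α from by ring]
    rw [r4, r5, r6]
    unfold dco
    have hAv : poch α n ≠ 0 := poch_ne_zero (fun q he => hα q (by linarith)) n
    have g2 : α+(n:ℝ) ≠ 0 := fun he => hα (-n) (by push_cast; linarith)
    have g7 : (n:ℝ)+(α-1)+1 ≠ 0 := fun he => hα (-n) (by push_cast; linarith)
    field_simp
    ring
  linarith [h0]

lemma Ccoef_zero (α β : ℝ) (n j : ℕ) : Ccoef α β n j 0 = 1 := by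
  simp [Ccoef]

lemma Ccoef_one (α β : ℝ) (n j : ℕ) :
    Ccoef α β n j 1 = if 1 ≤ j then ∑ k ∈ Finset.range j, bco (α + (k : ℝ)) (β - (k : ℝ)) (n : ℝ)
      else 0 := by
  simp [Ccoef]

lemma Ccoef_diag (α β : ℝ) (n j : ℕ) :
    Ccoef α β n (j+1) (j+1) = ∏ k ∈ Finset.range (j + 1),
      bco (α + (j : ℝ) - (k : ℝ)) (β - (j : ℝ) + (k : ℝ)) ((n : ℝ) - (k : ℝ)) := by
  match j with
  | 0 => rw [Ccoef_one, if_pos (by omega)]; simp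
  | (j+1) =>
    simp only [Ccoef]
    rw [if_pos trivial]

lemma Ccoef_rec (α β : ℝ) (n j l : ℕ) (hn : 1 ≤ n) (hl : l + 1 ≤ j + 1) :
    Ccoef α β n (j+1) (l+1)
      = (if l + 1 ≤ j then Ccoef α β n j (l+1) else 0)
        + bco (α + (j : ℝ)) (β - (j : ℝ)) (n : ℝ) * Ccoef α β (n-1) j l := by
  match l with
  | 0 =>
    rw [Ccoef_zero, mul_one, Ccoef_one, if_pos (by omega), Finset.sum_range_succ]
    by_cases hj : 1 ≤ j
    · rw [if_pos hj, Ccoef_one, if_pos hj]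
    · have hj0 : j = 0 := by omega
      subst hj0
      simp
  | (l+1) =>
    by_cases hcase : l + 2 = j + 1
    · have hlj : l + 1 = j := by omega
      subst hlj
      rw [if_neg (by omega), zero_add]
      show Ccoef α β n (l+1+1) (l+1+1) = _
      rw [Ccoef_diag, Ccoef_diag, Finset.prod_range_succ']
      have h0 : bco (α + ((l+1:ℕ) : ℝ) - ((0:ℕ) : ℝ)) (β - ((l+1:ℕ) : ℝ) + ((0:ℕ) : ℝ))
          ((n : ℝ) - ((0:ℕ) : ℝ)) = bco (α + ((l+1:ℕ) : ℝ)) (β - ((l+1:ℕ) : ℝ)) (n : ℝ) := by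
        norm_num
      have hterm : ∀ k ∈ Finset.range (l+1),
          bco (α + ((l+1:ℕ):ℝ) - ((k+1:ℕ):ℝ)) (β - ((l+1:ℕ):ℝ) + ((k+1:ℕ):ℝ))
            ((n:ℝ) - ((k+1:ℕ):ℝ))
          = bco (α + (l:ℝ) - (k:ℝ)) (β - (l:ℝ) + (k:ℝ)) (((n-1:ℕ):ℝ) - (k:ℝ)) := by
        intro k hk
        have e1 : α + ((l+1:ℕ):ℝ) - ((k+1:ℕ):ℝ) = α + (l:ℝ) - (k:ℝ) := by push_cast; ring
        have e2 : β - ((l+1:ℕ):ℝ) + ((k+1:ℕ):ℝ) = β - (l:ℝ) + (k:ℝ) := by push_cast; ring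
        have e3 : (n:ℝ) - ((k+1:ℕ):ℝ) = ((n-1:ℕ):ℝ) - (k:ℝ) := by
          rw [Nat.cast_sub hn]; push_cast; ring
        rw [e1, e2, e3]
      rw [Finset.prod_congr rfl hterm, h0, mul_comm]
    · have hle : l + 2 ≤ j := by omega
      show Ccoef α β n (j+1) (l+2) = _
      rw [if_pos (by omega)]
      simp only [Ccoef]
      rw [if_neg hcase, if_pos hle]

lemma claimC (α β : ℝ) (hα : ∀ q : ℤ, α ≠ (q:ℝ)) (hβ : ∀ q : ℤ, β ≠ (q:ℝ)) (j : ℕ) :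
    ∀ n, j ≤ n → ∀ z : ℝ, HR (α + (j:ℝ)) (β - (j:ℝ)) n z
      = ∑ l ∈ Finset.range (j+1), Ccoef α β n j l * HR α β (n-l) z := by
  induction j with
  | zero =>
      intro n _ z
      simp [Ccoef_zero]
  | succ j ih =>
      intro n hjn z
      have hn1 : 1 ≤ n := by omega
      have ea : α + ((j+1 : ℕ):ℝ) = (α + (j:ℝ)) + 1 := by push_cast; ring
      have eb : β - ((j+1 : ℕ):ℝ) = (β - (j:ℝ)) - 1 := by push_cast; ring
      rw [ea, eb]
      have hα' : ∀ q : ℤ, α + (j:ℝ) ≠ (q:ℝ) := fun q he => hα (q - j) (by push_cast; linarith)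
      have hβ' : ∀ q : ℤ, β - (j:ℝ) ≠ (q:ℝ) := fun q he => hβ (q + j) (by push_cast; linarith)
      rw [lemA' (α + (j:ℝ)) (β - (j:ℝ)) hα' hβ' n hn1 z,
        ih n (by omega) z, ih (n-1) (by omega) z]
      rw [Finset.sum_range_succ' (fun l => Ccoef α β n (j+1) l * HR α β (n-l) z) (j+1)]
      have main : ∀ l ∈ Finset.range (j+1),
          Ccoef α β n (j+1) (l+1) * HR α β (n-(l+1)) z
          = (if l+1 ≤ j then Ccoef α β n j (l+1) else 0) * HR α β (n-(l+1)) z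
            + bco (α + (j:ℝ)) (β - (j:ℝ)) (n:ℝ) *
                (Ccoef α β (n-1) j l * HR α β ((n-1)-l) z) := by
        intro l hl
        have hl' : l < j+1 := Finset.mem_range.1 hl
        rw [Ccoef_rec α β n j l hn1 (by omega), show n-(l+1) = (n-1)-l from by omega]
        ring
      rw [Finset.sum_congr rfl main, Finset.sum_add_distrib]
      have trunc : ∑ l ∈ Finset.range (j+1),
          (if l+1 ≤ j then Ccoef α β n j (l+1) else 0) * HR α β (n-(l+1)) z
          = ∑ l ∈ Finset.range j, Ccoef α β n j (l+1) * HR α β (n-(l+1)) z := by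
        rw [Finset.sum_range_succ, if_neg (by omega), zero_mul, add_zero]
        exact Finset.sum_congr rfl (fun l hl => by
          rw [if_pos (by exact Nat.succ_le_of_lt (Finset.mem_range.1 hl))])
      rw [trunc, ← Finset.mul_sum, Ccoef_zero]
      rw [Finset.sum_range_succ' (fun l => Ccoef α β n j l * HR α β (n-l) z) j]
      rw [Ccoef_zero]
      ring

def InS (α β : ℝ) (a b : ℕ) (f : ℝ → ℝ) : Prop :=
  ∃ c : ℕ → ℝ, ∀ z, f z = ∑ m ∈ Finset.Icc a b, c m * HR α β m z

lemma InS_congr {α β : ℝ} {a b : ℕ} {f g : ℝ → ℝ} (h : ∀ z, f z = g z) :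
    InS α β a b f → InS α β a b g := by
  rintro ⟨c, hc⟩; exact ⟨c, fun z => by rw [← h z]; exact hc z⟩

lemma InS_base (α β : ℝ) {a b m : ℕ} (h1 : a ≤ m) (h2 : m ≤ b) :
    InS α β a b (fun z => HR α β m z) := by
  refine ⟨fun i => if i = m then 1 else 0, fun z => ?_⟩
  simp only [ite_mul, one_mul, zero_mul]
  rw [Finset.sum_ite_eq' (Finset.Icc a b) m (fun i => HR α β i z),
    if_pos (Finset.mem_Icc.2 ⟨h1, h2⟩)]

lemma InS_smul {α β : ℝ} {a b : ℕ} {f : ℝ → ℝ} (r : ℝ) (h : InS α β a b f) :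
    InS α β a b (fun z => r * f z) := by
  obtain ⟨c, hc⟩ := h
  refine ⟨fun m => r * c m, fun z => ?_⟩
  dsimp only
  rw [hc z, Finset.mul_sum]
  exact Finset.sum_congr rfl (fun m _ => by ring)

lemma InS_add {α β : ℝ} {a b : ℕ} {f g : ℝ → ℝ} (hf : InS α β a b f) (hg : InS α β a b g) :
    InS α β a b (fun z => f z + g z) := by
  obtain ⟨c, hc⟩ := hf; obtain ⟨d, hd⟩ := hg
  refine ⟨fun m => c m + d m, fun z => ?_⟩
  dsimp only
  rw [hc z, hd z, ← Finset.sum_add_distrib]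
  exact Finset.sum_congr rfl (fun m _ => by ring)

lemma InS_zero (α β : ℝ) (a b : ℕ) : InS α β a b (fun _ => 0) :=
  ⟨fun _ => 0, fun z => by simp⟩

lemma InS_sum {α β : ℝ} {a b : ℕ} {ι : Type*} (s : Finset ι) (g : ι → ℝ → ℝ)
    (h : ∀ i ∈ s, InS α β a b (g i)) :
    InS α β a b (fun z => ∑ i ∈ s, g i z) := by
  classical
  induction s using Finset.induction_on with
  | empty => simpa using InS_zero α β a b
  | @insert x s' hx ih =>
      have h1 := h x (Finset.mem_insert_self x s')
      have h2 := ih (fun i hi => h i (Finset.mem_insert_of_mem hi))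
      exact InS_congr (fun z => by rw [Finset.sum_insert hx]) (InS_add h1 h2)

lemma InS_stepA (α β : ℝ) (hα : ∀ q : ℤ, α ≠ (q:ℝ)) (hβ : ∀ q : ℤ, β ≠ (q:ℝ))
    {a b : ℕ} (ha : 1 ≤ a) {f : ℝ → ℝ} (h : InS (α+1) (β-1) a b f) :
    InS α β (a-1) b f := by
  obtain ⟨c, hc⟩ := h
  apply InS_congr (f := fun z => ∑ m ∈ Finset.Icc a b, c m * HR (α+1) (β-1) m z)
    (fun z => (hc z).symm)
  apply InS_sum
  intro m hm
  obtain ⟨hm1, hm2⟩ := Finset.mem_Icc.1 hm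
  apply InS_smul
  apply InS_congr (f := fun z => HR α β m z + bco α β (m:ℝ) * HR α β (m-1) z)
    (fun z => (lemA' α β hα hβ m (le_trans ha hm1) z).symm)
  exact InS_add (InS_base α β (by omega) hm2)
    (InS_smul _ (InS_base α β (by omega) (by omega)))

lemma InS_stepB (α β : ℝ) (hα : ∀ q : ℤ, α ≠ (q:ℝ)) (hβ : ∀ q : ℤ, β ≠ (q:ℝ))
    {a b : ℕ} {f : ℝ → ℝ} (h : InS α β a b f) :
    InS (α-1) (β+1) a (b+1) (fun z => z * f z) := by
  obtain ⟨c, hc⟩ := h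
  apply InS_congr (f := fun z => ∑ m ∈ Finset.Icc a b, c m * (z * HR α β m z))
    (fun z => by rw [hc z, Finset.mul_sum]; exact Finset.sum_congr rfl (fun m _ => by ring))
  apply InS_sum
  intro m hm
  obtain ⟨hm1, hm2⟩ := Finset.mem_Icc.1 hm
  apply InS_smul
  apply InS_congr
    (f := fun z => HR (α-1) (β+1) (m+1) z + dco (α-1) (β+1) (m:ℝ) * HR (α-1) (β+1) m z)
    (fun z => (lemB α β hα hβ m z).symm)
  exact InS_add (InS_base _ _ (by omega) (by omega))
    (InS_smul _ (InS_base _ _ (by omega) (by omega)))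

lemma InS_down (s : ℕ) : ∀ (α β : ℝ), (∀ q : ℤ, α ≠ (q:ℝ)) → (∀ q : ℤ, β ≠ (q:ℝ)) →
    ∀ (a b : ℕ) (f : ℝ → ℝ), s ≤ a → InS (α+(s:ℝ)) (β-(s:ℝ)) a b f → InS α β (a-s) b f := by
  induction s with
  | zero =>
      intro α β hα hβ a b f _ h
      simpa using h
  | succ s ih =>
      intro α β hα hβ a b f hs h
      have e1 : α+((s+1:ℕ):ℝ) = (α+1)+(s:ℝ) := by push_cast; ring
      have e2 : β-((s+1:ℕ):ℝ) = (β-1)-(s:ℝ) := by push_cast; ring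
      rw [e1, e2] at h
      have hα' : ∀ q : ℤ, α+1 ≠ (q:ℝ) := fun q he => hα (q-1) (by push_cast; linarith)
      have hβ' : ∀ q : ℤ, β-1 ≠ (q:ℝ) := fun q he => hβ (q+1) (by push_cast; linarith)
      have h2 := ih (α+1) (β-1) hα' hβ' a b f (by omega) h
      have h3 := InS_stepA α β hα hβ (a := a-s) (by omega) h2
      rwa [show a-s-1 = a-(s+1) from by omega] at h3

lemma InS_up (j : ℕ) : ∀ (α β : ℝ), (∀ q : ℤ, α ≠ (q:ℝ)) → (∀ q : ℤ, β ≠ (q:ℝ)) →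
    ∀ (a b : ℕ) (f : ℝ → ℝ), InS α β a b f →
      InS (α-(j:ℝ)) (β+(j:ℝ)) a (b+j) (fun z => z^j * f z) := by
  induction j with
  | zero =>
      intro α β hα hβ a b f h
      simpa using h
  | succ j ih =>
      intro α β hα hβ a b f h
      have h1 := InS_stepB α β hα hβ h
      have hα' : ∀ q : ℤ, α-1 ≠ (q:ℝ) := fun q he => hα (q+1) (by push_cast; linarith)
      have hβ' : ∀ q : ℤ, β+1 ≠ (q:ℝ) := fun q he => hβ (q-1) (by push_cast; linarith)
      have h2 := ih (α-1) (β+1) hα' hβ' a (b+1) _ h1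
      have e1 : (α-1)-(j:ℝ) = α-((j+1:ℕ):ℝ) := by push_cast; ring
      have e2 : (β+1)+(j:ℝ) = β+((j+1:ℕ):ℝ) := by push_cast; ring
      have e3 : b+1+j = b+(j+1) := by omega
      rw [e1, e2, e3] at h2
      apply InS_congr (f := fun z => z^j * (z * f z)) (fun z => by ring) h2

/-- For `1 ≤ l0 ≤ n−1` and `1 ≤ j ≤ l0+1`, the function
`z^j · Σ_{l=0}^{l0+1} C^{(l)}_{n,l0+1} P_{n−l}(z)` lies in the span of
`{P_{n+j−l0−1}, …, P_{n+j}}`. -/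
theorem stmt14 (α β : ℝ)
    (hα : ∀ m : ℤ, α ≠ (m : ℝ)) (hβ : ∀ m : ℤ, β ≠ (m : ℝ))
    (hαβ : ∀ m : ℤ, α + β ≠ (m : ℝ))
    (n l0 j : ℕ) (hl0 : 1 ≤ l0) (hln : l0 + 1 ≤ n) (hj1 : 1 ≤ j) (hj : j ≤ l0 + 1) :
    ∃ c : ℕ → ℝ, ∀ z : ℝ,
      z ^ j * ∑ l ∈ Finset.range (l0 + 2), Ccoef α β n (l0 + 1) l * HR α β (n - l) z
        = ∑ m ∈ Finset.Icc (n + j - (l0 + 1)) (n + j), c m * HR α β m z := by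
  have hα1 : ∀ q : ℤ, α + ((l0+1 : ℕ):ℝ) ≠ (q:ℝ) :=
    fun q he => hα (q - (l0+1)) (by push_cast at he ⊢; linarith)
  have hβ1 : ∀ q : ℤ, β - ((l0+1 : ℕ):ℝ) ≠ (q:ℝ) :=
    fun q he => hβ (q + (l0+1)) (by push_cast at he ⊢; linarith)
  have h1 : InS (α+((l0+1:ℕ):ℝ)) (β-((l0+1:ℕ):ℝ)) n n
      (fun z => HR (α+((l0+1:ℕ):ℝ)) (β-((l0+1:ℕ):ℝ)) n z) :=
    InS_base _ _ le_rfl le_rfl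
  have h2 := InS_up j _ _ hα1 hβ1 n n _ h1
  have e1 : (α+((l0+1:ℕ):ℝ))-(j:ℝ) = α+(((l0+1-j:ℕ)):ℝ) := by
    rw [Nat.cast_sub hj]; push_cast; ring
  have e2 : (β-((l0+1:ℕ):ℝ))+(j:ℝ) = β-(((l0+1-j:ℕ)):ℝ) := by
    rw [Nat.cast_sub hj]; push_cast; ring
  rw [e1, e2] at h2
  have h3 := InS_down (l0+1-j) α β hα hβ n (n+j) _ (by omega) h2
  rw [show n-(l0+1-j) = n+j-(l0+1) from by omega] at h3
  obtain ⟨c, hc⟩ := h3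
  refine ⟨c, fun z => ?_⟩
  rw [show l0+2 = (l0+1)+1 from by omega]
  rw [← claimC α β hα hβ (l0+1) n hln z]
  exact hc z
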